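/- arXiv:0803.2785 — 4 statements merged into one kernel-verified Lean document; each statement's English description precedes it below -/
import Mathlib

section
/- The operators Φ and Ψ on the space ℂ_n[X] of polynomials of degree at most n, defined by (Φp)(X) = p(X+1) and (Ψp)(X) = (1-X)ⁿ·p(X/(1-X)), satisfy the braid relation Φ∘Ψ∘Φ = Ψ∘Φ∘Ψ. -/
open Polynomial

/-- Ferrand's operator `Φ : p(X) ↦ p(X+1)`. -/
noncomputable def ferrandPhi (p : Polynomial ℂ) : Polynomial ℂ :=
  p.comp (X + 1)

/-- Ferrand's operator `Ψ : p(X) ↦ (1-X)ⁿ p(X/(1-X))`, written via the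
coefficients of `p` as `Σ_k (coeff p k) Xᵏ (1-X)^{n-k}`. -/
noncomputable def ferrandPsi (n : ℕ) (p : Polynomial ℂ) : Polynomial ℂ :=
  ∑ k ∈ Finset.range (n + 1), Polynomial.C (p.coeff k) * X ^ k * (1 - X) ^ (n - k)

lemma eval_ferrandPhi (p : Polynomial ℂ) (z : ℂ) :
    eval z (ferrandPhi p) = eval (z + 1) p := by
  simp [ferrandPhi, eval_comp]

lemma degree_ferrandPhi_le {p : Polynomial ℂ} {n : ℕ} (hp : p.degree ≤ n) :
    (ferrandPhi p).degree ≤ n := by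
  rw [← natDegree_le_iff_degree_le] at hp ⊢
  rw [ferrandPhi, natDegree_comp]
  have : (X + 1 : Polynomial ℂ).natDegree = 1 := by
    simpa using natDegree_X_add_C (1 : ℂ)
  rw [this, mul_one]
  exact hp

lemma degree_ferrandPsi_le (n : ℕ) (p : Polynomial ℂ) :
    (ferrandPsi n p).degree ≤ n := by
  rw [← natDegree_le_iff_degree_le]
  apply Polynomial.natDegree_sum_le_of_forall_le
  intro k hk
  simp only [Finset.mem_range, Nat.lt_succ_iff] at hk
  calc (C (p.coeff k) * X ^ k * (1 - X) ^ (n - k)).natDegree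
      ≤ (C (p.coeff k) * X ^ k).natDegree + ((1 - X : Polynomial ℂ) ^ (n - k)).natDegree :=
        natDegree_mul_le
    _ ≤ (k + (n - k) * (1 - X : Polynomial ℂ).natDegree) := by
        gcongr
        · calc (C (p.coeff k) * X ^ k).natDegree ≤ (C (p.coeff k)).natDegree + (X ^ k : Polynomial ℂ).natDegree := natDegree_mul_le
            _ ≤ k := by simp
        · exact natDegree_pow_le
    _ ≤ n := by
        have : (1 - X : Polynomial ℂ).natDegree = 1 := by
          have : (1 - X : Polynomial ℂ) = -(X - C 1) := by rw [neg_sub]; simp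
          rw [this, natDegree_neg, natDegree_X_sub_C]
        rw [this, mul_one]
        omega

lemma eval_ferrandPsi {n : ℕ} {p : Polynomial ℂ} (hp : p.degree ≤ n) (z : ℂ)
    (hz : (1 : ℂ) - z ≠ 0) :
    eval z (ferrandPsi n p) = (1 - z) ^ n * eval (z / (1 - z)) p := by
  have hd : p.natDegree < n + 1 := Nat.lt_succ_of_le (natDegree_le_of_degree_le hp)
  rw [eval_eq_sum_range' hd, ferrandPsi, eval_finset_sum, Finset.mul_sum]
  apply Finset.sum_congr rfl
  intro k hk
  simp only [Finset.mem_range, Nat.lt_succ_iff] at hk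
  rw [eval_mul, eval_mul, eval_C, eval_pow, eval_pow, eval_X, eval_sub, eval_one, eval_X]
  rw [div_pow]
  have hsplit : (1 - z) ^ n = (1 - z) ^ (n - k) * (1 - z) ^ k := by
    rw [← pow_add]; congr 1; omega
  rw [hsplit]
  field_simp

theorem ferrand_braid_relation (n : ℕ) (p : Polynomial ℂ) (hp : p.degree ≤ n) :
    ferrandPhi (ferrandPsi n (ferrandPhi p)) = ferrandPsi n (ferrandPhi (ferrandPsi n p)) := by
  have hΦp : (ferrandPhi p).degree ≤ n := degree_ferrandPhi_le hp
  have hΨΦp : (ferrandPsi n (ferrandPhi p)).degree ≤ n := degree_ferrandPsi_le n _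
  have hΨp : (ferrandPsi n p).degree ≤ n := degree_ferrandPsi_le n p
  have hΦΨp : (ferrandPhi (ferrandPsi n p)).degree ≤ n := degree_ferrandPhi_le hΨp
  apply Polynomial.eq_of_infinite_eval_eq
  apply Set.Infinite.mono (s := ({0, 1} : Set ℂ)ᶜ)
  · intro z hz
    simp only [Set.mem_compl_iff, Set.mem_insert_iff, Set.mem_singleton_iff, not_or] at hz
    obtain ⟨hz0, hz1⟩ := hz
    have h1z : (1 : ℂ) - z ≠ 0 := sub_ne_zero.mpr (Ne.symm hz1)
    have h1z1 : (1 : ℂ) - (z + 1) ≠ 0 := by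
      intro h; apply hz0; linear_combination -h
    have hkey : (1 : ℂ) - (z / (1 - z) + 1) ≠ 0 := by
      intro h
      apply hz0
      field_simp at h
      linear_combination -h
    show eval z _ = eval z _
    rw [eval_ferrandPhi, eval_ferrandPsi hΦp _ h1z1, eval_ferrandPhi]
    rw [eval_ferrandPsi hΦΨp z h1z, eval_ferrandPhi, eval_ferrandPsi hp _ hkey]
    have hnz : -z ≠ 0 := neg_ne_zero.mpr hz0
    have harg1 : (z + 1) / (1 - (z + 1)) + 1 = -1 / z := by
      rw [show (1 : ℂ) - (z + 1) = -z by ring, div_add' _ _ _ hnz,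
        div_eq_div_iff hnz hz0]
      ring
    have harg2 : (z / (1 - z) + 1) / (1 - (z / (1 - z) + 1)) = -1 / z := by
      rw [div_eq_div_iff hkey (by simpa using hz0)]
      field_simp
      ring
    rw [harg1, harg2, ← mul_assoc, ← mul_pow]
    congr 2
    field_simp
    ring
  · apply Set.Finite.infinite_compl
    exact (Set.finite_singleton (1 : ℂ)).insert 0
end

section
/- For any nonzero complex numbers λ₁, λ₂, λ₃, the 3×3 matrices σ₁ = [[λ₁, λ₁λ₃λ₂⁻¹+λ₂, λ₂],[0, λ₂, λ₂],[0, 0, λ₃]] and σ₂ = [[λ₃,0,0],[-λ₂,λ₂,0],[λ₂, -λ₁λ₃λ₂⁻¹-λ₂, λ₁]] satisfy the braid relation σ₁σ₂σ₁ = σ₂σ₁σ₂. -/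
set_option maxHeartbeats 1000000 in
theorem tuba_wenzl_dim3 (l1 l2 l3 : ℂ) (h1 : l1 ≠ 0) (h2 : l2 ≠ 0) (h3 : l3 ≠ 0) :
    let s1 : Matrix (Fin 3) (Fin 3) ℂ :=
      !![l1, l1 * l3 * l2⁻¹ + l2, l2; 0, l2, l2; 0, 0, l3]
    let s2 : Matrix (Fin 3) (Fin 3) ℂ :=
      !![l3, 0, 0; -l2, l2, 0; l2, -(l1 * l3 * l2⁻¹) - l2, l1]
    s1 * s2 * s1 = s2 * s1 * s2 := by
  intro s1 s2
  show s1 * s2 * s1 = s2 * s1 * s2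
  simp only [s1, s2, Matrix.mul_fin_three]
  congr 1 <;> field_simp <;> ring
end

section
/- For a nilpotent strictly upper triangular (n+1)×(n+1) matrix E_q with (E_q)_{k,k+1} = (n-k)_q (the q-integer (m)_q = 1+q+⋯+q^{m-1}) and all other entries zero, the q-exponential exp_q(E_q) := Σ_{m≥0} E_qᵐ/(m)!_q has entries (exp_q(E_q))_{ij} = (n-i choose j-i)_q · q-binomial coefficients, i.e. equals the q-Pascal triangle matrix σ₁(q,n) with (σ₁(q,n))_{ij} = Gaussian binomial (n-i choose j-i)_q for i ≤ j. -/
/-- The q-integer `(k)_q = (qᵏ - 1)/(q - 1)`. -/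
noncomputable def qInt (q : ℂ) (k : ℕ) : ℂ := (q ^ k - 1) / (q - 1)

/-- `(n)!_q = ∏_{k=1}^n (k)_q`. -/
noncomputable def qFact (q : ℂ) (n : ℕ) : ℂ := ∏ k ∈ Finset.range n, qInt q (k + 1)

/-- Gaussian binomial coefficient `(n choose k)_q`. -/
noncomputable def qBinom (q : ℂ) (n k : ℕ) : ℂ :=
  qFact q n / (qFact q k * qFact q (n - k))

lemma qFact_succ (q : ℂ) (m : ℕ) : qFact q (m + 1) = qFact q m * qInt q (m + 1) := by
  simp [qFact, Finset.prod_range_succ]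

lemma prod_qInt_mul (q : ℂ) (a k : ℕ) (h : k ≤ a) :
    (∏ t ∈ Finset.range k, qInt q (a - t)) * qFact q (a - k) = qFact q a := by
  induction k with
  | zero => simp
  | succ k ih =>
    have hk : k ≤ a := by omega
    have h1 : a - k = (a - (k + 1)) + 1 := by omega
    rw [Finset.prod_range_succ, ← ih hk, h1, qFact_succ]
    have h2 : a - (k + 1) + 1 = a - k := by omega
    rw [h2]
    ring

lemma qE_pow_apply (n : ℕ) (q : ℂ) (m : ℕ) (i j : Fin (n+1)) :
    (((Matrix.of fun i j : Fin (n+1) =>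
        if (j : ℕ) = (i : ℕ) + 1 then qInt q (n - (i : ℕ)) else 0) :
        Matrix (Fin (n+1)) (Fin (n+1)) ℂ) ^ m) i j
    = if (j : ℕ) = (i : ℕ) + m then
        ∏ t ∈ Finset.range m, qInt q (n - (i : ℕ) - t) else 0 := by
  induction m generalizing j with
  | zero =>
    simp [Matrix.one_apply, Fin.ext_iff, eq_comm]
  | succ m ih =>
    rw [pow_succ, Matrix.mul_apply]
    by_cases hj : (j : ℕ) = (i : ℕ) + m + 1
    · have him : (i : ℕ) + m ≤ n := by omega
      rw [Finset.sum_eq_single (⟨(i : ℕ) + m, by omega⟩ : Fin (n+1))]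
      · rw [ih]
        simp only [Matrix.of_apply]
        rw [if_pos trivial, if_pos hj,
          if_pos (show (j:ℕ) = (i:ℕ) + (m+1) by omega), Finset.prod_range_succ]
        congr 2
        omega
      · intro b _ hb
        rw [ih, if_neg, zero_mul]
        intro h
        exact hb (Fin.ext (by simpa using h))
      · simp
    · rw [if_neg (show ¬(j:ℕ) = (i:ℕ) + (m+1) by omega)]
      apply Finset.sum_eq_zero
      intro l _
      rw [ih]
      by_cases hl : (l : ℕ) = (i : ℕ) + m
      · rw [if_pos hl, Matrix.of_apply, if_neg, mul_zero]
        omega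
      · rw [if_neg hl, zero_mul]

theorem qexp_eq_qpascal (n : ℕ) (q : ℂ)
    (hfac : ∀ m : ℕ, 1 ≤ m → m ≤ n → qFact q m ≠ 0) :
    let E : Matrix (Fin (n + 1)) (Fin (n + 1)) ℂ :=
      Matrix.of fun i j => if (j : ℕ) = (i : ℕ) + 1 then qInt q (n - (i : ℕ)) else 0
    -- the q-exponential `exp_q(E) = Σ_m Eᵐ/(m)!_q`, a finite sum since `E^{n+1} = 0`
    (∑ m ∈ Finset.range (n + 2), (qFact q m)⁻¹ • E ^ m) =
      Matrix.of fun (i j : Fin (n + 1)) =>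
        if (i : ℕ) ≤ (j : ℕ) then qBinom q (n - (i : ℕ)) ((j : ℕ) - (i : ℕ)) else 0 := by
  intro E
  have hfac' : ∀ m : ℕ, m ≤ n → qFact q m ≠ 0 := by
    intro m hm
    rcases Nat.eq_zero_or_pos m with h | h
    · subst h; simp [qFact]
    · exact hfac m h hm
  ext i j
  rw [Matrix.sum_apply]
  simp only [Matrix.smul_apply, smul_eq_mul]
  by_cases hij : (i : ℕ) ≤ (j : ℕ)
  · set k : ℕ := (j : ℕ) - (i : ℕ) with hk
    have hksum : (j : ℕ) = (i : ℕ) + k := by omega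
    have hkn : k ≤ n - (i : ℕ) := by omega
    rw [Finset.sum_eq_single k]
    · rw [qE_pow_apply, if_pos hksum, Matrix.of_apply, if_pos hij]
      have hprod := prod_qInt_mul q (n - (i : ℕ)) k hkn
      have h1 : qFact q k ≠ 0 := hfac' k (by omega)
      have h2 : qFact q (n - (i : ℕ) - k) ≠ 0 := hfac' _ (by omega)
      rw [qBinom, ← hprod]
      rw [← hk]
      field_simp
    · intro m _ hm
      rw [qE_pow_apply, if_neg (by omega), mul_zero]
    · intro h
      exact absurd (Finset.mem_range.mpr (by omega)) h
  · rw [Matrix.of_apply, if_neg hij]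
    apply Finset.sum_eq_zero
    intro m _
    rw [qE_pow_apply, if_neg (by omega), mul_zero]
end

section
/- Let ρ(n) denote the (n+1)-dimensional irreducible representation of sl₂ with ρ(n)(X) the matrix with entries (n-k) on the superdiagonal (positions (k,k+1)) and ρ(n)(Y) the matrix with entries (k+1) on the subdiagonal (positions (k+1,k)), rows/columns indexed 0..n. Then the matrices exp(ρ(n)(X)) and exp(-ρ(n)(Y)) satisfy the braid relation A·B·A = B·A·B. -/
open Finset
set_option linter.unusedSectionVars false
set_option maxHeartbeats 1000000

namespace Sl2Braid
set_option linter.unusedSectionVars false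
set_option maxHeartbeats 1000000

section general
variable {A : Type*} [Ring A] [Algebra ℂ A] [TopologicalSpace A] [IsTopologicalRing A] [T2Space A]

lemma exp_nil {m : A} {K : ℕ} (h : m ^ K = 0) {N : ℕ} (hN : K ≤ N) :
    NormedSpace.exp m = ∑ k ∈ Finset.range N, ((Nat.factorial k : ℂ))⁻¹ • m ^ k := by
  rw [NormedSpace.exp_eq_tsum ℂ]
  refine tsum_eq_sum ?_
  intro k hk
  have hk' : K ≤ k := by simp at hk; omega
  have hz : m ^ k = 0 := by
    rw [show k = K + (k - K) by omega, pow_add, h, zero_mul]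
  simp [hz]

lemma exp_comm {m z : A} {K : ℕ} (h : m ^ K = 0) (hz : Commute z m) :
    NormedSpace.exp m * z = z * NormedSpace.exp m := by
  rw [exp_nil h (le_refl K), Finset.sum_mul, Finset.mul_sum]
  refine Finset.sum_congr rfl fun k _ => ?_
  rw [smul_mul_assoc, mul_smul_comm, (hz.pow_right k).eq]

lemma fact_coeff (i : ℕ) : ((Nat.factorial (i+1) : ℂ))⁻¹ * ((i : ℂ) + 1) = ((Nat.factorial i : ℂ))⁻¹ := by
  have h : ((Nat.factorial (i+1) : ℂ)) = ((i : ℂ) + 1) * (Nat.factorial i : ℂ) := by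
    rw [Nat.factorial_succ]; push_cast; ring
  have h1 : ((i : ℂ) + 1) ≠ 0 := Nat.cast_add_one_ne_zero i
  have h2 : ((Nat.factorial i : ℂ)) ≠ 0 := Nat.cast_ne_zero.mpr (Nat.factorial_ne_zero i)
  rw [h, mul_inv]
  field_simp

lemma exp_push {m y p : A} {K : ℕ} (hK : m ^ K = 0) (e : ℂ)
    (h1 : m * y = y * m + p) (h2 : m * p = p * m + (2 * e) • m) :
    NormedSpace.exp m * y =
      y * NormedSpace.exp m + p * NormedSpace.exp m
        + e • (m * NormedSpace.exp m) := by
  have step : ∀ k : ℕ, m ^ (k+1) * y =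
      y * m ^ (k+1) + (((k:ℂ)+1)) • (p * m ^ k) + ((((k:ℂ)+1) * k) * e) • m ^ k := by
    intro k
    induction k with
    | zero => simpa using h1
    | succ k ih =>
      have h0 : m ^ (k+1+1) * y = m * (m ^ (k+1) * y) := by
        rw [← mul_assoc, ← pow_succ']
      rw [h0, ih]
      rw [mul_add, mul_add, mul_smul_comm, mul_smul_comm, ← mul_assoc, ← mul_assoc, h1, h2]
      simp only [add_mul, smul_mul_assoc, mul_assoc, ← pow_succ', ← pow_succ]
      push_cast
      module
  have hexp1 : NormedSpace.exp m = ∑ k ∈ Finset.range (K+1), ((Nat.factorial k : ℂ))⁻¹ • m ^ k :=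
    exp_nil hK (by omega)
  have hexpK : NormedSpace.exp m = ∑ k ∈ Finset.range K, ((Nat.factorial k : ℂ))⁻¹ • m ^ k :=
    exp_nil hK le_rfl
  -- LHS
  have lhs_eq : NormedSpace.exp m * y
      = ∑ i ∈ Finset.range K, ((Nat.factorial (i+1) : ℂ))⁻¹ • (m ^ (i+1) * y) + (1:ℂ) • (m ^ 0 * y) := by
    rw [hexp1, Finset.sum_mul, Finset.sum_range_succ']
    simp [smul_mul_assoc]
  have T1 : y * NormedSpace.exp m
      = ∑ i ∈ Finset.range K, ((Nat.factorial (i+1) : ℂ))⁻¹ • (y * m ^ (i+1)) + (1:ℂ) • (y * m ^ 0) := by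
    rw [hexp1, Finset.mul_sum, Finset.sum_range_succ']
    simp [mul_smul_comm]
  have T2 : p * NormedSpace.exp m
      = ∑ i ∈ Finset.range K, (((Nat.factorial (i+1) : ℂ))⁻¹ * ((i:ℂ)+1)) • (p * m ^ i) := by
    rw [hexpK, Finset.mul_sum]
    refine Finset.sum_congr rfl fun i _ => ?_
    rw [fact_coeff, mul_smul_comm]
  have T3 : e • (m * NormedSpace.exp m)
      = ∑ i ∈ Finset.range K, (((Nat.factorial (i+1) : ℂ))⁻¹ * (((i:ℂ)+1) * (i:ℂ) * e)) • m ^ i := by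
    have hg : ∀ i ∈ Finset.range K, (((Nat.factorial (i+1) : ℂ))⁻¹ * (((i:ℂ)+1) * (i:ℂ) * e)) • m ^ i
        = (e * (i:ℂ) * ((Nat.factorial i : ℂ))⁻¹) • m ^ i := by
      intro i _
      congr 1
      rw [show ((Nat.factorial (i+1) : ℂ))⁻¹ * (((i:ℂ)+1) * (i:ℂ) * e)
        = (((Nat.factorial (i+1) : ℂ))⁻¹ * ((i:ℂ)+1)) * ((i:ℂ) * e) by ring, fact_coeff]
      ring
    rw [Finset.sum_congr rfl hg]
    have step2 : ∑ i ∈ Finset.range K, (e * (i:ℂ) * ((Nat.factorial i : ℂ))⁻¹) • m ^ i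
        = ∑ i ∈ Finset.range (K+1), (e * (i:ℂ) * ((Nat.factorial i : ℂ))⁻¹) • m ^ i := by
      rw [Finset.sum_range_succ, hK, smul_zero, add_zero]
    rw [step2, Finset.sum_range_succ']
    simp only [Nat.cast_zero, mul_zero, zero_mul, zero_smul, add_zero]
    rw [hexpK, Finset.mul_sum, Finset.smul_sum]
    refine (Finset.sum_congr rfl fun i _ => ?_).symm
    rw [mul_smul_comm, smul_smul, ← pow_succ']
    congr 1
    push_cast
    rw [show e * ((Nat.factorial i : ℂ))⁻¹ = (((Nat.factorial (i+1) : ℂ))⁻¹ * ((i:ℂ)+1)) * e by rw [fact_coeff]; ring]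
    ring
  rw [lhs_eq, T1, T2, T3]
  rw [Finset.sum_congr rfl (fun i _ => congrArg _ (step i))]
  simp only [smul_add, Finset.sum_add_distrib, smul_smul]
  simp only [pow_zero, one_mul, mul_one, one_smul]
  abel

end general



def sx (n : ℕ) : Matrix (Fin (n+1)) (Fin (n+1)) ℂ :=
  Matrix.of fun i j => if (j : ℕ) = (i : ℕ) + 1 then ((n - (i : ℕ) : ℕ) : ℂ) else 0

def sy (n : ℕ) : Matrix (Fin (n+1)) (Fin (n+1)) ℂ :=
  Matrix.of fun i j => if (i : ℕ) = (j : ℕ) + 1 then (((j : ℕ) + 1 : ℕ) : ℂ) else 0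

def sd (n : ℕ) : Matrix (Fin (n+1)) (Fin (n+1)) ℂ :=
  Matrix.diagonal (fun i : Fin (n+1) => (n : ℂ) - 2 * ((i : ℕ) : ℂ))

lemma sx_pow_apply (n m : ℕ) : ∀ (i j : Fin (n+1)), (j:ℕ) < (i:ℕ) + m → ((sx n) ^ m) i j = 0 := by
  induction m with
  | zero =>
    intro i j h
    rw [pow_zero]
    exact Matrix.one_apply_ne (by rintro rfl; omega)
  | succ m ih =>
    intro i j h
    rw [pow_succ', Matrix.mul_apply]
    refine Finset.sum_eq_zero fun k _ => ?_
    by_cases hk : (k:ℕ) = (i:ℕ) + 1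
    · rw [ih k j (by omega), mul_zero]
    · have hz : sx n i k = 0 := by simp [sx, hk]
      rw [hz, zero_mul]

lemma sx_nil (n : ℕ) : (sx n) ^ (n+1) = 0 := by
  ext i j
  rw [sx_pow_apply n (n+1) i j (by have := j.isLt; omega)]
  simp

lemma sy_pow_apply (n m : ℕ) : ∀ (i j : Fin (n+1)), (i:ℕ) < (j:ℕ) + m → ((sy n) ^ m) i j = 0 := by
  induction m with
  | zero =>
    intro i j h
    rw [pow_zero]
    exact Matrix.one_apply_ne (by rintro rfl; omega)
  | succ m ih =>
    intro i j h
    rw [pow_succ, Matrix.mul_apply]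
    refine Finset.sum_eq_zero fun k _ => ?_
    by_cases hk : (k:ℕ) = (j:ℕ) + 1
    · rw [ih i k (by omega), zero_mul]
    · have hz : sy n k j = 0 := by simp [sy, hk]
      rw [hz, mul_zero]

lemma sy_nil (n : ℕ) : (sy n) ^ (n+1) = 0 := by
  ext i j
  rw [sy_pow_apply n (n+1) i j (by have := i.isLt; omega)]
  simp

lemma negsy_nil (n : ℕ) : (-(sy n)) ^ (n+1) = 0 := by
  rw [neg_pow, sy_nil, mul_zero]

lemma XY_apply (n : ℕ) (i j : Fin (n+1)) :
    (sx n * sy n) i j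
      = if (i:ℕ) = (j:ℕ) then ((n - (i:ℕ) : ℕ) : ℂ) * (((i:ℕ) + 1 : ℕ) : ℂ) else 0 := by
  simp only [sx, sy, Matrix.mul_apply, Matrix.of_apply]
  rw [Fin.sum_univ_eq_sum_range
    (fun t => (if t = (i:ℕ) + 1 then ((n - (i:ℕ) : ℕ) : ℂ) else 0)
      * (if t = (j:ℕ) + 1 then (((j:ℕ) + 1 : ℕ) : ℂ) else 0)) (n+1)]
  rw [Finset.sum_eq_single ((i:ℕ) + 1)]
  · by_cases h : (i:ℕ) = (j:ℕ)
    · simp [h]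
    · have : ¬ ((i:ℕ) + 1 = (j:ℕ) + 1) := by omega
      simp [h, this]
  · intro b _ hb
    simp [hb]
  · intro hb
    have : (n : ℕ) - (i:ℕ) = 0 := by simp at hb; omega
    simp [this]

lemma YX_apply (n : ℕ) (i j : Fin (n+1)) :
    (sy n * sx n) i j
      = if ((i:ℕ) = (j:ℕ) ∧ 1 ≤ (i:ℕ)) then ((i:ℕ) : ℂ) * ((n - ((i:ℕ) - 1) : ℕ) : ℂ) else 0 := by
  simp only [sy, sx, Matrix.mul_apply, Matrix.of_apply]
  rw [Fin.sum_univ_eq_sum_range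
    (fun t => (if (i:ℕ) = t + 1 then ((t + 1 : ℕ) : ℂ) else 0)
      * (if (j:ℕ) = t + 1 then ((n - t : ℕ) : ℂ) else 0)) (n+1)]
  rw [Finset.sum_eq_single ((i:ℕ) - 1)]
  · by_cases h1 : 1 ≤ (i:ℕ)
    · have hi : (i:ℕ) = ((i:ℕ) - 1) + 1 := by omega
      by_cases h : (i:ℕ) = (j:ℕ)
      · have hj : (j:ℕ) = ((i:ℕ) - 1) + 1 := by omega
        simp only [← hi, ← hj, if_pos rfl, if_pos (And.intro h h1), hj]
        simp [h1]
      · have hj : ¬ ((j:ℕ) = ((i:ℕ) - 1) + 1) := by omega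
        simp [hj, h]
    · have : ¬ ((i:ℕ) = ((i:ℕ) - 1) + 1) := by omega
      simp [this, h1]
  · intro b _ hb
    have : ¬ ((i:ℕ) = b + 1) := by omega
    simp [this]
  · intro hb
    exact absurd (Finset.mem_range.mpr (by omega)) hb


lemma F1 (n : ℕ) : sx n * sy n - sy n * sx n = sd n := by
  ext i j
  rw [Matrix.sub_apply, XY_apply, YX_apply]
  by_cases h : (i:ℕ) = (j:ℕ)
  · have hij : i = j := Fin.ext h
    subst hij
    have hin : (i:ℕ) ≤ n := by have := i.isLt; omega
    by_cases h1 : 1 ≤ (i:ℕ)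
    · simp only [if_pos rfl, if_pos (And.intro rfl h1), sd, Matrix.diagonal_apply_eq]
      have c1 : ((n - (i:ℕ) : ℕ) : ℂ) = (n : ℂ) - ((i:ℕ) : ℂ) := by
        rw [Nat.cast_sub hin]
      have c2 : ((n - ((i:ℕ) - 1) : ℕ) : ℂ) = (n : ℂ) - (((i:ℕ) : ℂ) - 1) := by
        rw [Nat.cast_sub (by omega), Nat.cast_sub h1, Nat.cast_one]
      rw [c1, c2]
      simp only [h1, and_true, true_and, if_true]
      push_cast
      ring
    · have h0 : (i:ℕ) = 0 := by omega
      simp only [if_pos rfl, sd, Matrix.diagonal_apply_eq, h0]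
      simp [h0, Nat.cast_sub hin]
  · have hij : i ≠ j := fun hh => h (congrArg _ hh)
    simp [h, sd, Matrix.diagonal_apply_ne _ hij]

lemma F2 (n : ℕ) : sx n * sd n = sd n * sx n + (-2 : ℂ) • sx n := by
  ext i j
  simp only [sd, Matrix.mul_diagonal, Matrix.diagonal_mul, Matrix.add_apply, Matrix.smul_apply,
    smul_eq_mul, sx, Matrix.of_apply]
  by_cases h : (j:ℕ) = (i:ℕ) + 1
  · have hc : ((j:ℕ) : ℂ) = ((i:ℕ) : ℂ) + 1 := by exact_mod_cast congrArg (Nat.cast (R := ℂ)) h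
    simp only [if_pos h, hc]
    ring
  · simp [h]

lemma F3 (n : ℕ) : sy n * sd n = sd n * sy n + (2 : ℂ) • sy n := by
  ext i j
  simp only [sd, Matrix.mul_diagonal, Matrix.diagonal_mul, Matrix.add_apply, Matrix.smul_apply,
    smul_eq_mul, sy, Matrix.of_apply]
  by_cases h : (i:ℕ) = (j:ℕ) + 1
  · have hc : ((i:ℕ) : ℂ) = ((j:ℕ) : ℂ) + 1 := by exact_mod_cast congrArg (Nat.cast (R := ℂ)) h
    simp only [if_pos h, hc]
    ring
  · simp [h]



end Sl2Braid

namespace Sl2Braid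

lemma braid (n : ℕ) :
    NormedSpace.exp (sx n) * NormedSpace.exp (-(sy n)) * NormedSpace.exp (sx n)
      = NormedSpace.exp (-(sy n)) * NormedSpace.exp (sx n) * NormedSpace.exp (-(sy n)) := by
  set X := sx n with hXdef
  set Y := sy n with hYdef
  set D := sd n with hDdef
  set A := NormedSpace.exp X with hAdef
  set B := NormedSpace.exp (-Y) with hBdef
  have hXnil : X ^ (n+1) = 0 := sx_nil n
  have hYnil : (-Y) ^ (n+1) = 0 := negsy_nil n
  have f1 : X * Y - Y * X = D := F1 n
  have f2 : X * D = D * X + (-2 : ℂ) • X := F2 n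
  have f3 : Y * D = D * Y + (2 : ℂ) • Y := F3 n
  have h1XY : X * Y = Y * X + D := by rw [← f1]; abel
  have K1 : A * Y = Y * A + D * A + (-1 : ℂ) • (X * A) :=
    exp_push hXnil (-1) h1XY (by rw [f2]; norm_num)
  have K2 : A * D = D * A + ((-2 : ℂ) • X) * A + (0 : ℂ) • (X * A) :=
    exp_push hXnil 0 f2 (by simp [mul_smul_comm, smul_mul_assoc])
  have h1BX : (-Y) * X = X * (-Y) + D := by
    rw [← f1, neg_mul, mul_neg]; abel
  have h2BX : (-Y) * D = D * (-Y) + ((2 : ℂ) * 1) • (-Y) := by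
    rw [neg_mul, f3, mul_neg]
    simp only [smul_neg, mul_one]
    abel
  have K3 : B * X = X * B + D * B + (1 : ℂ) • ((-Y) * B) :=
    exp_push hYnil 1 h1BX h2BX
  have h1BD : (-Y) * D = D * (-Y) + ((-2 : ℂ) • Y) := by
    rw [neg_mul, f3, mul_neg]
    module
  have h2BD : (-Y) * ((-2 : ℂ) • Y) = ((-2 : ℂ) • Y) * (-Y) + ((2 : ℂ) * 0) • (-Y) := by
    simp [mul_smul_comm, smul_mul_assoc, neg_mul, mul_neg]
  have K4 : B * D = D * B + ((-2 : ℂ) • Y) * B + (0 : ℂ) • ((-Y) * B) :=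
    exp_push hYnil 0 h1BD h2BD
  have hAX : A * X = X * A := exp_comm hXnil (Commute.refl X)
  have hBY : B * Y = Y * B := exp_comm hYnil ((Commute.refl Y).neg_right)
  -- push-through lemmas with a trailing factor
  have pA_X : ∀ C, A * (X * C) = X * (A * C) := fun C => by
    rw [← mul_assoc, hAX, mul_assoc]
  have pA_D : ∀ C, A * (D * C) = D * (A * C) + (-2 : ℂ) • (X * (A * C)) := fun C => by
    rw [← mul_assoc, K2]
    simp only [add_mul, smul_mul_assoc, mul_assoc]
    try module
  have pA_Y : ∀ C, A * (Y * C) = Y * (A * C) + D * (A * C) + (-1 : ℂ) • (X * (A * C)) := fun C => by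
    rw [← mul_assoc, K1]
    simp only [add_mul, smul_mul_assoc, mul_assoc]
  have pB_X : ∀ C, B * (X * C) = X * (B * C) + D * (B * C) + (-1 : ℂ) • (Y * (B * C)) := fun C => by
    rw [← mul_assoc, K3]
    simp only [add_mul, smul_mul_assoc, mul_assoc, neg_mul, one_smul]
    try module
  have pB_D : ∀ C, B * (D * C) = D * (B * C) + (-2 : ℂ) • (Y * (B * C)) := fun C => by
    rw [← mul_assoc, K4]
    simp only [add_mul, smul_mul_assoc, mul_assoc, neg_mul, zero_smul, add_zero]
    try module
  have pB_Y : ∀ C, B * (Y * C) = Y * (B * C) := fun C => by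
    rw [← mul_assoc, hBY, mul_assoc]
  have hsX : A * B * A * X = -Y * (A * B * A) := by
    simp only [mul_assoc, neg_mul]
    rw [hAX, pB_X]
    simp only [mul_add, mul_smul_comm]
    rw [pA_X, pA_D, pA_Y]
    module
  have hsY : A * B * A * Y = -X * (A * B * A) := by
    simp only [mul_assoc, neg_mul]
    rw [K1]
    simp only [mul_add, mul_smul_comm]
    rw [pB_Y, pB_D, pB_X]
    simp only [mul_add, mul_smul_comm, smul_add, smul_smul]
    rw [pA_Y, pA_D, pA_X]
    module
  -- invertibility of s := A * B * A
  have huA : IsUnit A := Matrix.isUnit_exp X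
  have huB : IsUnit B := Matrix.isUnit_exp (-Y)
  have hu : IsUnit (A * B * A) := (huA.mul huB).mul huA
  set s := A * B * A with hsdef
  have hdet : IsUnit s.det := (Matrix.isUnit_iff_isUnit_det s).mp hu
  have hsinv : s * s⁻¹ = 1 := Matrix.mul_nonsing_inv s hdet
  have hinvs : s⁻¹ * s = 1 := Matrix.nonsing_inv_mul s hdet
  have hconjX : s * X * s⁻¹ = -Y := by
    rw [hsdef, hsX, ← hsdef, mul_assoc, hsinv, mul_one]
  have hconjY : s * (-Y) * s⁻¹ = X := by
    rw [hsdef, mul_neg, hsY, ← hsdef]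
    simp only [neg_mul, neg_neg, mul_assoc, hsinv, mul_one]
  have hB : B = s * A * s⁻¹ := by
    calc B = NormedSpace.exp (s * X * s⁻¹) := by rw [hconjX]
      _ = s * A * s⁻¹ := Matrix.exp_conj s X hu
  have hA : A = s * B * s⁻¹ := by
    calc A = NormedSpace.exp (s * (-Y) * s⁻¹) := by rw [hconjY]
      _ = s * B * s⁻¹ := Matrix.exp_conj s (-Y) hu
  have hBu : B * s = s * A := by
    rw [hB, mul_assoc, hinvs, mul_one]
  have hAu : A * s = s * B := by
    rw [hA, mul_assoc, hinvs, mul_one]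
  have pAu : ∀ C, A * (s * C) = s * (B * C) := fun C => by
    rw [← mul_assoc, hAu, mul_assoc]
  have pBu : ∀ C, B * (s * C) = s * (A * C) := fun C => by
    rw [← mul_assoc, hBu, mul_assoc]
  have hs' : s = A * (B * A) := by rw [hsdef, mul_assoc]
  have e1 : B * A * B * s = s * s := by
    calc B * A * B * s = B * (A * (B * s)) := by simp only [mul_assoc]
      _ = B * (A * (s * A)) := by rw [hBu]
      _ = B * (s * (B * A)) := by rw [pAu]
      _ = s * (A * (B * A)) := by rw [pBu]
      _ = s * s := by rw [← hs']
  have e2 : A * B * A * s = s * s := by rw [← hsdef]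
  have e3 := e2.trans e1.symm
  have e4 := congrArg (fun M => M * s⁻¹) e3
  have e5 : A * (B * A) = B * (A * B) := by
    simpa only [mul_assoc, hsinv, mul_one] using e4
  rw [hsdef]
  simpa only [mul_assoc] using e5

end Sl2Braid

theorem exp_sl2_braid_relation (n : ℕ) :
    let X : Matrix (Fin (n + 1)) (Fin (n + 1)) ℂ :=
      Matrix.of fun i j => if (j : ℕ) = (i : ℕ) + 1 then ((n - (i : ℕ) : ℕ) : ℂ) else 0
    let Y : Matrix (Fin (n + 1)) (Fin (n + 1)) ℂ :=
      Matrix.of fun i j => if (i : ℕ) = (j : ℕ) + 1 then (((j : ℕ) + 1 : ℕ) : ℂ) else 0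
    let A := NormedSpace.exp X
    let B := NormedSpace.exp (-Y)
    A * B * A = B * A * B := by
  intro X Y A B
  exact Sl2Braid.braid n
end
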